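/- Let $\mu$ be a self-similar measure in $\mathbb{R}^N$ for a homogeneous IFS $\varphi_i(x)=rO(x)+t_i$, $i\in I$ (fixed $r\in(0,1)$, fixed orthogonal $O$, translations $t_i$ not all equal). Then for every $k\in\{1,\dots,N-1\}$ there exists a $k$-dimensional linear subspace $V\subset\mathbb{R}^N$ such that the orthogonal projection $P_V$ is not injective on any Borel set of full $\mu$-measure. -/

import Mathlib

open MeasureTheory Metric Set

open scoped NNReal ENNReal

/-- Any finite-rank subspace contains a subspace of any smaller finrank. -/
lemma exists_submodule_finrank_eq_le {E : Type*} [NormedAddCommGroup E]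
    [InnerProductSpace ℝ E] [FiniteDimensional ℝ E]
    (U : Submodule ℝ E) (k : ℕ) (hk : k ≤ Module.finrank ℝ U) :
    ∃ V : Submodule ℝ E, Module.finrank ℝ V = k ∧ V ≤ U := by
  let b := Module.finBasis ℝ U
  let f : Fin k → E := fun i => (b (Fin.castLE hk i) : E)
  have hli : LinearIndependent ℝ f := by
    have h1 : LinearIndependent ℝ (fun i : Fin k => b (Fin.castLE hk i)) :=
      b.linearIndependent.comp _ (Fin.castLE_injective hk)
    exact h1.map' U.subtype U.ker_subtype
  refine ⟨Submodule.span ℝ (Set.range f), ?_, ?_⟩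
  · rw [finrank_span_eq_card hli, Fintype.card_fin]
  · rw [Submodule.span_le]
    rintro _ ⟨i, rfl⟩
    exact (b (Fin.castLE hk i)).2

/-- Proposition 1.6: let `μ` be a self-similar measure in `ℝ^N` for a
homogeneous IFS `φ i x = r O x + t i` (fixed ratio `r ∈ (0,1)`, fixed linear isometry `O`,
translations `t i` not all equal).  Then for every `k ∈ {1, …, N-1}` there is a
`k`-dimensional linear subspace `V ⊆ ℝ^N` such that the orthogonal projection onto `V` is
not injective on any Borel set of full `μ`-measure. -/
theorem homogeneous_self_similar_projection_not_injective (N : ℕ)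
    (I : Type) [Fintype I]
    (r : ℝ) (hr : r ∈ Set.Ioo (0 : ℝ) 1)
    (O : EuclideanSpace ℝ (Fin N) ≃ₗᵢ[ℝ] EuclideanSpace ℝ (Fin N))
    (t : I → EuclideanSpace ℝ (Fin N)) (ht : ∃ i j : I, t i ≠ t j)
    (p : I → ℝ≥0∞) (hp : ∀ i, 0 < p i) (hps : ∑ i, p i = 1)
    (μ : Measure (EuclideanSpace ℝ (Fin N))) [IsProbabilityMeasure μ]
    (hstat : μ = ∑ i, p i • μ.map (fun x => r • O x + t i)) :
    ∀ k : ℕ, 1 ≤ k → k ≤ N - 1 →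
      ∃ V : Submodule ℝ (EuclideanSpace ℝ (Fin N)), Module.finrank ℝ V = k ∧
        ∀ Y : Set (EuclideanSpace ℝ (Fin N)), MeasurableSet Y → μ Yᶜ = 0 →
          ¬ Set.InjOn (fun x => (V.orthogonalProjection x : V)) Y := by
  intro k hk1 hkN
  obtain ⟨i, j, hij⟩ := ht
  set w : EuclideanSpace ℝ (Fin N) := t i - t j with hw
  have hw0 : w ≠ 0 := sub_ne_zero.mpr hij
  -- dimension of the orthogonal complement of w
  have hdim : Module.finrank ℝ (EuclideanSpace ℝ (Fin N)) = N := finrank_euclideanSpace_fin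
  have hU : k ≤ Module.finrank ℝ ((ℝ ∙ w)ᗮ : Submodule ℝ (EuclideanSpace ℝ (Fin N))) := by
    have h1 : Module.finrank ℝ (ℝ ∙ w : Submodule ℝ (EuclideanSpace ℝ (Fin N))) = 1 :=
      finrank_span_singleton hw0
    have h2 := Submodule.finrank_add_finrank_orthogonal (K := ((ℝ ∙ w) : Submodule ℝ (EuclideanSpace ℝ (Fin N))))
    omega
  obtain ⟨V, hVrank, hVle⟩ := exists_submodule_finrank_eq_le ((ℝ ∙ w)ᗮ) k hU
  have hwV : w ∈ Vᗮ := by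
    rw [Submodule.mem_orthogonal]
    intro v hv
    have := (Submodule.mem_orthogonal' _ _).mp (hVle hv) w
      (Submodule.mem_span_singleton_self w)
    exact this
  refine ⟨V, hVrank, ?_⟩
  intro Y hY hYc hinj
  -- measurability of the maps
  have hmeas : ∀ a : I, Measurable (fun x : EuclideanSpace ℝ (Fin N) => r • O x + t a) := by
    intro a
    exact (((O.continuous.const_smul r).add continuous_const)).measurable
  -- each preimage of Yᶜ is null
  have hnull : ∀ a : I, μ ((fun x : EuclideanSpace ℝ (Fin N) => r • O x + t a) ⁻¹' Yᶜ) = 0 := by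
    intro a
    have h0 : μ Yᶜ = ∑ b : I, p b * μ ((fun x : EuclideanSpace ℝ (Fin N) => r • O x + t b) ⁻¹' Yᶜ) := by
      conv_lhs => rw [hstat]
      rw [Measure.finset_sum_apply]
      refine Finset.sum_congr rfl fun b _ => ?_
      rw [Measure.smul_apply, smul_eq_mul, Measure.map_apply (hmeas b) hY.compl]
    rw [hYc] at h0
    have := (Finset.sum_eq_zero_iff.mp h0.symm) a (Finset.mem_univ a)
    rcases mul_eq_zero.mp this with h | h
    · exact absurd h (hp a).ne'
    · exact h
  -- the set of points mapped into Y by both maps is nonempty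
  have hC : ((fun x : EuclideanSpace ℝ (Fin N) => r • O x + t i) ⁻¹' Y ∩ (fun x : EuclideanSpace ℝ (Fin N) => r • O x + t j) ⁻¹' Y).Nonempty := by
    by_contra hemp
    rw [Set.not_nonempty_iff_eq_empty] at hemp
    have hcompl : ((fun x : EuclideanSpace ℝ (Fin N) => r • O x + t i) ⁻¹' Yᶜ ∪
        (fun x : EuclideanSpace ℝ (Fin N) => r • O x + t j) ⁻¹' Yᶜ) = Set.univ := by
      ext z
      simp only [Set.mem_union, Set.mem_preimage, Set.mem_compl_iff, Set.mem_univ, iff_true]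
      by_contra hz
      push_neg at hz
      have : z ∈ ((fun x : EuclideanSpace ℝ (Fin N) => r • O x + t i) ⁻¹' Y ∩
          (fun x : EuclideanSpace ℝ (Fin N) => r • O x + t j) ⁻¹' Y) := ⟨hz.1, hz.2⟩
      rw [hemp] at this
      exact this
    have h1 : μ Set.univ = 0 := by
      rw [← hcompl]
      exact measure_union_null (hnull i) (hnull j)
    simp [measure_univ] at h1
  obtain ⟨x, hxi, hxj⟩ := hC
  set y₁ : EuclideanSpace ℝ (Fin N) := r • O x + t i
  set y₂ : EuclideanSpace ℝ (Fin N) := r • O x + t j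
  have hy12 : y₁ - y₂ = w := by
    show r • O x + t i - (r • O x + t j) = t i - t j
    abel
  have hyne : y₁ ≠ y₂ := fun h => hw0 (by rw [← hy12, h, sub_self])
  have hproj : V.orthogonalProjection y₁ = V.orthogonalProjection y₂ := by
    have h0 : V.orthogonalProjection (y₁ - y₂) = 0 := by
      rw [hy12]
      exact Submodule.orthogonalProjectionOnto_apply_of_mem_orthogonal hwV
    rw [map_sub] at h0
    exact sub_eq_zero.mp h0
  exact hyne (hinj hxi hxj hproj)
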